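/- Both L_{6,2} and L_{6,3} contract onto the decomposable Lie algebra sa(2,ℝ) ⊕ ℝ, the 6-dimensional real Lie algebra with basis X₁,…,X₆ whose nonzero brackets are those of sa(2,ℝ) on X₁,…,X₅ and in which X₆ is central. -/

import Mathlib

open Filter Topology

/-- `IsContraction g h` : the Lie algebra `h` is a contraction of the Lie algebra `g`. -/
def IsContraction (g h : Type*) [LieRing g] [LieAlgebra ℝ g] [TopologicalSpace g]
    [LieRing h] [LieAlgebra ℝ h] : Prop :=
  ∃ (f : ℝ → (g ≃ₗ[ℝ] g)) (e : g ≃ₗ[ℝ] h), ∀ X Y : g,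
    Filter.Tendsto (fun t : ℝ => (f t).symm ⁅f t X, f t Y⁆) Filter.atTop
      (nhds (e.symm ⁅e X, e Y⁆))

/-- Structure constants of `L_{6,2}` (upper triangular part, 0-based indices). -/
def L62T {L : Type*} [AddCommGroup L] [Module ℝ L] (b : Fin 6 → L) : Fin 6 → Fin 6 → L :=
  fun i j =>
    if i = 0 ∧ j = 1 then (2 : ℝ) • b 1 else
    if i = 0 ∧ j = 2 then (-2 : ℝ) • b 2 else
    if i = 1 ∧ j = 2 then b 0 else
    if i = 0 ∧ j = 3 then b 3 else
    if i = 1 ∧ j = 4 then b 3 else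
    if i = 2 ∧ j = 3 then b 4 else
    if i = 0 ∧ j = 4 then -b 4 else
    if i = 3 ∧ j = 4 then b 5 else 0

/-- Structure constants of `L_{6,3}` (upper triangular part, 0-based indices). -/
def L63T {L : Type*} [AddCommGroup L] [Module ℝ L] (b : Fin 6 → L) : Fin 6 → Fin 6 → L :=
  fun i j =>
    if i = 0 ∧ j = 1 then (2 : ℝ) • b 1 else
    if i = 0 ∧ j = 2 then (-2 : ℝ) • b 2 else
    if i = 1 ∧ j = 2 then b 0 else
    if i = 0 ∧ j = 3 then b 3 else
    if i = 1 ∧ j = 4 then b 3 else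
    if i = 2 ∧ j = 3 then b 4 else
    if i = 0 ∧ j = 4 then -b 4 else
    if i = 3 ∧ j = 5 then b 3 else
    if i = 4 ∧ j = 5 then b 4 else 0

/-- Structure constants of the decomposable algebra `sa(2,ℝ) ⊕ ℝ`: the brackets of
`sa(2,ℝ)` on `X₁,…,X₅` while `X₆` is central (upper triangular part, 0-based). -/
def sa2PlusRT {L : Type*} [AddCommGroup L] [Module ℝ L] (b : Fin 6 → L) : Fin 6 → Fin 6 → L :=
  fun i j =>
    if i = 0 ∧ j = 1 then (2 : ℝ) • b 1 else
    if i = 0 ∧ j = 2 then (-2 : ℝ) • b 2 else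
    if i = 1 ∧ j = 2 then b 0 else
    if i = 0 ∧ j = 3 then b 3 else
    if i = 0 ∧ j = 4 then -b 4 else
    if i = 1 ∧ j = 4 then b 3 else
    if i = 2 ∧ j = 3 then b 4 else 0

section Aux

variable {A C : Type*} [AddCommGroup A] [Module ℝ A] [AddCommGroup C] [Module ℝ C]

lemma skewBilinExt (b : Module.Basis (Fin 6) ℝ A) (β : A →ₗ[ℝ] A →ₗ[ℝ] C)
    (hskew : ∀ X Y, β X Y = - β Y X)
    (h : ∀ i j : Fin 6, i < j → β (b i) (b j) = 0) : ∀ X Y, β X Y = 0 := by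
  have hz : β = 0 := by
    apply b.ext; intro i
    apply b.ext; intro j
    rcases lt_trichotomy i j with hij|hij|hij
    · simpa using h i j hij
    · subst hij
      have h2 : β (b i) (b i) + β (b i) (b i) = 0 := by
        nth_rewrite 2 [hskew (b i) (b i)]; abel
      have h3 : (2 : ℝ) • β (b i) (b i) = 0 := by rw [two_smul]; exact h2
      simpa using (smul_eq_zero.mp h3).resolve_left (by norm_num)
    · rw [hskew (b i) (b j), h j i hij]; simp
  intro X Y; rw [hz]; simp

noncomputable def Fc (π : A →ₗ[ℝ] A) (hπ : ∀ X, π (π X) = π X) (c : ℝ) (hc : c ≠ 0) :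
    A ≃ₗ[ℝ] A :=
  LinearEquiv.ofLinear (LinearMap.id + (c - 1) • π) (LinearMap.id + (c⁻¹ - 1) • π)
    (by
      ext X
      simp only [LinearMap.comp_apply, LinearMap.add_apply, LinearMap.smul_apply,
        LinearMap.id_apply, LinearMap.id_coe, id_eq, map_add, map_smul, hπ]
      match_scalars <;> field_simp <;> ring)
    (by
      ext X
      simp only [LinearMap.comp_apply, LinearMap.add_apply, LinearMap.smul_apply,
        LinearMap.id_apply, LinearMap.id_coe, id_eq, map_add, map_smul, hπ]
      match_scalars <;> field_simp <;> ring)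

lemma Fc_apply (π : A →ₗ[ℝ] A) (hπ : ∀ X, π (π X) = π X) (c : ℝ) (hc : c ≠ 0) (X : A) :
    Fc π hπ c hc X = X + (c - 1) • π X := rfl

lemma Fc_symm_apply (π : A →ₗ[ℝ] A) (hπ : ∀ X, π (π X) = π X) (c : ℝ) (hc : c ≠ 0) (X : A) :
    (Fc π hπ c hc).symm X = X + (c⁻¹ - 1) • π X := rfl

end Aux

section Aux2

lemma g_tendsto : Filter.Tendsto (fun t : ℝ => ((1 + t ^ 2)⁻¹ - 1)) Filter.atTop (nhds (-1)) := by
  have h0 : Filter.Tendsto (fun t : ℝ => (1 + t ^ 2)⁻¹) Filter.atTop (nhds 0) :=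
    tendsto_inv_atTop_zero.comp
      (tendsto_atTop_add_const_left _ (1 : ℝ) (tendsto_pow_atTop two_ne_zero))
  simpa using h0.sub tendsto_const_nhds

lemma contraction_core {A C : Type*} [LieRing A] [LieAlgebra ℝ A] [TopologicalSpace A]
    [IsTopologicalAddGroup A] [ContinuousSMul ℝ A] [LieRing C] [LieAlgebra ℝ C]
    (f : ℝ → (A ≃ₗ[ℝ] A)) (e : A ≃ₗ[ℝ] C) (Q : A → A → A) (g : ℝ → ℝ)
    (hform : ∀ t X Y, (f t).symm ⁅f t X, f t Y⁆ = ⁅X, Y⁆ + g t • Q X Y)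
    (hg : Filter.Tendsto g Filter.atTop (nhds (-1)))
    (hlim : ∀ X Y : A, e.symm ⁅e X, e Y⁆ = ⁅X, Y⁆ + (-1 : ℝ) • Q X Y) :
    IsContraction A C := by
  refine ⟨f, e, fun X Y => ?_⟩
  rw [hlim]
  exact (tendsto_const_nhds.add (hg.smul_const _)).congr fun t => (hform t X Y).symm

end Aux2

/-- Both `L_{6,2}` and `L_{6,3}` contract onto `sa(2,ℝ) ⊕ ℝ`. -/
theorem L62_L63_contract_onto_sa2_plus_R
    (A : Type) [LieRing A] [LieAlgebra ℝ A]
    [TopologicalSpace A] [IsTopologicalAddGroup A] [ContinuousSMul ℝ A] [T2Space A]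
    (bA : Module.Basis (Fin 6) ℝ A) (hA : ∀ i j : Fin 6, i < j → ⁅bA i, bA j⁆ = L62T (⇑bA) i j)
    (B : Type) [LieRing B] [LieAlgebra ℝ B]
    [TopologicalSpace B] [IsTopologicalAddGroup B] [ContinuousSMul ℝ B] [T2Space B]
    (bB : Module.Basis (Fin 6) ℝ B) (hB : ∀ i j : Fin 6, i < j → ⁅bB i, bB j⁆ = L63T (⇑bB) i j)
    (C : Type) [LieRing C] [LieAlgebra ℝ C]
    (bC : Module.Basis (Fin 6) ℝ C) (hC : ∀ i j : Fin 6, i < j → ⁅bC i, bC j⁆ = sa2PlusRT (⇑bC) i j) :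
    IsContraction A C ∧ IsContraction B C := by
  constructor
  · -- L_{6,2}
    set π : A →ₗ[ℝ] A := (bA.coord 5).smulRight (bA 5) with hπdef
    have hπX : ∀ X : A, π X = bA.coord 5 X • bA 5 := fun _ => rfl
    have hπb : ∀ j : Fin 6, π (bA j) = if j = 5 then bA 5 else 0 := by
      intro j
      rw [hπX]
      rcases eq_or_ne j 5 with h | h
      · subst h; simp [Module.Basis.coord_apply, Module.Basis.repr_self]
      · simp [Module.Basis.coord_apply, Module.Basis.repr_self, Finsupp.single_apply, h,
          Ne.symm h]
    have hidem : ∀ X : A, π (π X) = π X := by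
      intro X
      simp [hπX, map_smul, Module.Basis.coord_apply, Module.Basis.repr_self]
    have h5L : ∀ X : A, ⁅bA 5, X⁆ = 0 := by
      have hb : ∀ j : Fin 6, ⁅bA 5, bA j⁆ = 0 := by
        intro j
        fin_cases j <;>
          first
            | exact lie_self _
            | (rw [← lie_skew, hA _ 5 (by decide)]; simp [L62T])
      have had : (LieAlgebra.ad ℝ A) (bA 5) = 0 :=
        bA.ext fun j => by simpa [LieAlgebra.ad_apply] using hb j
      intro X
      simpa [LieAlgebra.ad_apply] using DFunLike.congr_fun had X
    have hπl : ∀ Z W : A, ⁅π Z, W⁆ = 0 := fun Z W => by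
      rw [hπX, smul_lie, h5L, smul_zero]
    have hπr : ∀ Z W : A, ⁅Z, π W⁆ = 0 := fun Z W => by
      rw [hπX, lie_smul, ← lie_skew, h5L, neg_zero, smul_zero]
    set e : A ≃ₗ[ℝ] C := bA.equiv bC (Equiv.refl _) with hedef
    have he : ∀ k : Fin 6, e (bA k) = bC k := fun k => by
      simp [hedef, Module.Basis.equiv_apply]
    have he' : ∀ k : Fin 6, e.symm (bC k) = bA k := fun k => by
      rw [← he k, LinearEquiv.symm_apply_apply]
    have hkey : ∀ X Y : A,
        ⁅X, Y⁆ + (-1 : ℝ) • π ⁅X, Y⁆ - e.symm ⁅e X, e Y⁆ = 0 := by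
      refine skewBilinExt bA
        (LinearMap.mk₂ ℝ (fun X Y => ⁅X, Y⁆ + (-1 : ℝ) • π ⁅X, Y⁆ - e.symm ⁅e X, e Y⁆)
          ?_ ?_ ?_ ?_) ?_ ?_
      · intro m₁ m₂ n
        simp only [add_lie, map_add, smul_add]
        abel
      · intro c m n
        simp only [smul_lie, map_smul, smul_sub, smul_add, smul_comm c (-1 : ℝ)]
      · intro m n₁ n₂
        simp only [lie_add, map_add, smul_add]
        abel
      · intro c m n
        simp only [lie_smul, map_smul, smul_sub, smul_add, smul_comm c (-1 : ℝ)]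
      · intro X Y
        simp only [LinearMap.mk₂_apply]
        rw [← lie_skew X Y, ← lie_skew (e X) (e Y)]
        simp only [map_neg, smul_neg]
        abel
      · intro i j hij
        simp only [LinearMap.mk₂_apply]
        rw [hA i j hij, he, he, hC i j hij]
        fin_cases i <;> fin_cases j <;>
          simp [L62T, sa2PlusRT, hπb, he', map_smul, map_neg, map_zero, sub_eq_zero]
    refine contraction_core (fun t => Fc π hidem (1 + t ^ 2) (by positivity)) e
      (fun X Y => π ⁅X, Y⁆) (fun t => (1 + t ^ 2)⁻¹ - 1) ?_ g_tendsto ?_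
    · intro t X Y
      rw [Fc_apply, Fc_apply, Fc_symm_apply]
      simp [lie_add, add_lie, lie_smul, smul_lie, hπl, hπr]
    · intro X Y
      have := hkey X Y
      rw [sub_eq_zero] at this
      exact this.symm
  · -- L_{6,3}
    set π : B →ₗ[ℝ] B := (bB.coord 5).smulRight (bB 5) with hπdef
    have hπX : ∀ X : B, π X = bB.coord 5 X • bB 5 := fun _ => rfl
    have hπb : ∀ j : Fin 6, π (bB j) = if j = 5 then bB 5 else 0 := by
      intro j
      rw [hπX]
      rcases eq_or_ne j 5 with h | h
      · subst h; simp [Module.Basis.coord_apply, Module.Basis.repr_self]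
      · simp [Module.Basis.coord_apply, Module.Basis.repr_self, Finsupp.single_apply, h, Ne.symm h]
    have hidem : ∀ X : B, π (π X) = π X := by
      intro X
      simp [hπX, map_smul, Module.Basis.coord_apply, Module.Basis.repr_self]
    have hbr0 : ∀ X Y : B, π ⁅X, Y⁆ = 0 := by
      refine skewBilinExt bB (LinearMap.mk₂ ℝ (fun X Y => π ⁅X, Y⁆) ?_ ?_ ?_ ?_) ?_ ?_
      · intro m₁ m₂ n; simp [add_lie]
      · intro c m n; simp [smul_lie]
      · intro m n₁ n₂; simp [lie_add]
      · intro c m n; simp [lie_smul]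
      · intro X Y
        simp only [LinearMap.mk₂_apply]
        rw [← lie_skew X Y, map_neg]
      · intro i j hij
        simp only [LinearMap.mk₂_apply]
        rw [hB i j hij]
        fin_cases i <;> fin_cases j <;>
          simp [L63T, hπb, map_smul, map_neg, map_zero]
    have h55 : ∀ X Y : B, ⁅π X, π Y⁆ = 0 := fun X Y => by
      rw [hπX, hπX, smul_lie, lie_smul, lie_self, smul_zero, smul_zero]
    set e : B ≃ₗ[ℝ] C := bB.equiv bC (Equiv.refl _) with hedef
    have he : ∀ k : Fin 6, e (bB k) = bC k := fun k => by
      simp [hedef, Module.Basis.equiv_apply]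
    have he' : ∀ k : Fin 6, e.symm (bC k) = bB k := fun k => by
      rw [← he k, LinearEquiv.symm_apply_apply]
    have e05 := hB 0 5 (by decide)
    have e15 := hB 1 5 (by decide)
    have e25 := hB 2 5 (by decide)
    have e35 := hB 3 5 (by decide)
    have e45 := hB 4 5 (by decide)
    have hkey : ∀ X Y : B,
        ⁅X, Y⁆ + (-1 : ℝ) • (⁅X, π Y⁆ + ⁅π X, Y⁆) - e.symm ⁅e X, e Y⁆ = 0 := by
      refine skewBilinExt bB
        (LinearMap.mk₂ ℝ
          (fun X Y => ⁅X, Y⁆ + (-1 : ℝ) • (⁅X, π Y⁆ + ⁅π X, Y⁆) - e.symm ⁅e X, e Y⁆)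
          ?_ ?_ ?_ ?_) ?_ ?_
      · intro m₁ m₂ n
        simp only [add_lie, lie_add, map_add, smul_add]
        abel
      · intro c m n
        simp only [smul_lie, lie_smul, map_smul, smul_sub, smul_add, smul_comm c (-1 : ℝ)]
      · intro m n₁ n₂
        simp only [add_lie, lie_add, map_add, smul_add]
        abel
      · intro c m n
        simp only [smul_lie, lie_smul, map_smul, smul_sub, smul_add, smul_comm c (-1 : ℝ)]
      · intro X Y
        simp only [LinearMap.mk₂_apply]
        rw [← lie_skew X Y, ← lie_skew (e X) (e Y), ← lie_skew X (π Y),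
          ← lie_skew (π X) Y]
        simp only [map_neg, smul_neg, smul_add, neg_add]
        abel
      · intro i j hij
        simp only [LinearMap.mk₂_apply]
        rw [hB i j hij, he, he, hC i j hij]
        fin_cases i <;> fin_cases j <;>
          first
            | exact absurd hij (by decide)
            | simp [L63T, sa2PlusRT, hπb, he', e05, e15, e25, e35, e45,
                map_smul, map_neg, map_zero, sub_eq_zero]
    refine contraction_core
      (fun t => Fc π hidem ((1 + t ^ 2)⁻¹) (by positivity)) e
      (fun X Y => ⁅X, π Y⁆ + ⁅π X, Y⁆) (fun t => (1 + t ^ 2)⁻¹ - 1) ?_ g_tendsto ?_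
    · intro t X Y
      rw [Fc_apply, Fc_apply, Fc_symm_apply]
      simp only [lie_add, add_lie, lie_smul, smul_lie, h55, smul_zero, add_zero,
        map_add, map_smul, hbr0, smul_add]
      module
    · intro X Y
      have := hkey X Y
      rw [sub_eq_zero] at this
      exact this.symm
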